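/- Let x_1,...,x_N : [0,∞) → ℝ be a solution of the first-order cooperative system with communication failures (fixed scaling) on the real line, and fix T, μ > 0 such that the family {M_ij} satisfies the Integral Scrambling Coefficient condition with parameters μ, T. Let D(t) := max_{i,j} |x_i(t) − x_j(t)|, let φ_min and φ_max be the minimum and maximum of φ on [0, D(0)], and set K_min := φ_min, K_max := φ_max, γ̃ := μ K_min / (2(N(1 + K_max T) + μ K_min)). Then for all n ∈ ℕ, D(nT) ≤ (1 − exp(−2 K_max T) γ̃)^n · D(0). -/

import Mathlib

open MeasureTheory Set Filter Topology

namespace CoopAux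
variable {N : ℕ} [NeZero N]

noncomputable def rhs (φ : ℝ → ℝ) (M : Fin N → Fin N → ℝ → ℝ) (x : Fin N → ℝ → ℝ)
    (i : Fin N) (s : ℝ) : ℝ :=
  (N : ℝ)⁻¹ * ∑ j, M i j s * φ |x i s - x j s| * (x j s - x i s)

variable {φ : ℝ → ℝ} {M : Fin N → Fin N → ℝ → ℝ} {x : Fin N → ℝ → ℝ}

lemma rhs_neg (i : Fin N) (s : ℝ) :
    rhs φ M (fun j t => -(x j t)) i s = -(rhs φ M x i s) := by
  simp only [rhs, ← mul_neg, ← Finset.sum_neg_distrib]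
  congr 1
  refine Finset.sum_congr rfl fun j _ => ?_
  rw [show -(x i s) - -(x j s) = -(x i s - x j s) by ring, abs_neg, abs_sub_comm]
  ring

lemma phi_cont (hφ_lip : ∃ K : NNReal, LipschitzOnWith K φ (Ici 0)) :
    ContinuousOn φ (Ici 0) := by
  obtain ⟨K, hK⟩ := hφ_lip
  exact hK.continuousOn

lemma dist_cont (hx_cont : ∀ i, ContinuousOn (x i) (Ici 0)) (i j : Fin N) :
    ContinuousOn (fun s => φ |x i s - x j s|) (Ici 0) → True := fun _ => trivial

/-- continuity of the `j`-th interaction term without the weight -/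
lemma term_cont (hφ_lip : ∃ K : NNReal, LipschitzOnWith K φ (Ici 0))
    (hx_cont : ∀ i, ContinuousOn (x i) (Ici 0)) (i j : Fin N) :
    ContinuousOn (fun s => φ |x i s - x j s| * (x j s - x i s)) (Ici 0) := by
  have h1 : ContinuousOn (fun s => |x i s - x j s|) (Ici 0) :=
    ((hx_cont i).sub (hx_cont j)).abs
  have h2 : ContinuousOn (fun s => φ |x i s - x j s|) (Ici 0) :=
    (phi_cont hφ_lip).comp h1 (fun s _ => Set.mem_Ici.mpr (abs_nonneg _))
  exact h2.mul ((hx_cont j).sub (hx_cont i))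

lemma rhs_integrable (hφ_lip : ∃ K : NNReal, LipschitzOnWith K φ (Ici 0))
    (hφ_pos : ∀ r : ℝ, 0 ≤ r → 0 < φ r)
    (hM_meas : ∀ i j, Measurable (M i j))
    (hM_range : ∀ i j, ∀ t : ℝ, 0 ≤ t → M i j t ∈ Icc (0:ℝ) 1)
    (hx_cont : ∀ i, ContinuousOn (x i) (Ici 0))
    (i : Fin N) {c d : ℝ} (hc : 0 ≤ c) (hcd : c ≤ d) :
    IntervalIntegrable (rhs φ M x i) volume c d := by
  rw [intervalIntegrable_iff, uIoc_of_le hcd]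
  have hsub : Ioc c d ⊆ Ici 0 := fun s hs => le_trans hc (le_of_lt hs.1)
  have hsub' : Ioc c d ⊆ Icc c d := Ioc_subset_Icc_self
  refine (Integrable.const_mul ?_ _)
  refine integrable_finset_sum _ (fun j _ => ?_)
  -- term : M i j s * (φ |x i s - x j s| * (x j s - x i s))
  have hterm : ContinuousOn (fun s => φ |x i s - x j s| * (x j s - x i s)) (Ici 0) :=
    term_cont hφ_lip hx_cont i j
  have hint : IntegrableOn (fun s => φ |x i s - x j s| * (x j s - x i s)) (Ioc c d) volume :=
    ((hterm.mono ((Icc_subset_Ici_iff hcd).2 hc)).integrableOn_compact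
      isCompact_Icc).mono_set hsub'
  have hmeas : AEStronglyMeasurable (fun s => M i j s * φ |x i s - x j s| * (x j s - x i s))
      (volume.restrict (Ioc c d)) := by
    have h1 : AEStronglyMeasurable (M i j) (volume.restrict (Ioc c d)) :=
      (hM_meas i j).aestronglyMeasurable
    have h2 : AEStronglyMeasurable (fun s => φ |x i s - x j s| * (x j s - x i s))
        (volume.restrict (Ioc c d)) :=
      ((hterm.mono hsub).aemeasurable measurableSet_Ioc).aestronglyMeasurable
    simpa [mul_assoc, Pi.mul_def] using h1.mul h2
  refine (hint.abs).mono' hmeas ?_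
  rw [ae_restrict_iff' measurableSet_Ioc]
  refine Eventually.of_forall (fun s hs => ?_)
  have hs0 : (0:ℝ) ≤ s := hsub hs
  have hM := hM_range i j s hs0
  have hM1 : |M i j s| ≤ 1 := by rw [abs_of_nonneg hM.1]; exact hM.2
  show ‖M i j s * φ |x i s - x j s| * (x j s - x i s)‖ ≤ |φ |x i s - x j s| * (x j s - x i s)|
  rw [Real.norm_eq_abs, mul_assoc, abs_mul]
  calc |M i j s| * |φ |x i s - x j s| * (x j s - x i s)|
      ≤ 1 * |φ |x i s - x j s| * (x j s - x i s)| :=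
        mul_le_mul_of_nonneg_right hM1 (abs_nonneg _)
    _ = |φ |x i s - x j s| * (x j s - x i s)| := one_mul _

lemma increment (hφ_lip : ∃ K : NNReal, LipschitzOnWith K φ (Ici 0))
    (hφ_pos : ∀ r : ℝ, 0 ≤ r → 0 < φ r)
    (hM_meas : ∀ i j, Measurable (M i j))
    (hM_range : ∀ i j, ∀ t : ℝ, 0 ≤ t → M i j t ∈ Icc (0:ℝ) 1)
    (hx_cont : ∀ i, ContinuousOn (x i) (Ici 0))
    (hx_sol : ∀ i, ∀ t : ℝ, 0 ≤ t → x i t = x i 0 + ∫ s in (0:ℝ)..t, rhs φ M x i s)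
    (i : Fin N) {c d : ℝ} (hc : 0 ≤ c) (hcd : c ≤ d) :
    x i d - x i c = ∫ s in c..d, rhs φ M x i s := by
  have h1 := hx_sol i c hc
  have h2 := hx_sol i d (hc.trans hcd)
  have hi1 : IntervalIntegrable (rhs φ M x i) volume 0 c :=
    rhs_integrable hφ_lip hφ_pos hM_meas hM_range hx_cont i le_rfl hc
  have hi2 : IntervalIntegrable (rhs φ M x i) volume 0 d :=
    rhs_integrable hφ_lip hφ_pos hM_meas hM_range hx_cont i le_rfl (hc.trans hcd)
  rw [h1, h2]
  rw [← intervalIntegral.integral_interval_sub_left hi2 hi1]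
  ring


noncomputable def xsup (x : Fin N → ℝ → ℝ) (t : ℝ) : ℝ := ⨆ i, x i t
noncomputable def xinf (x : Fin N → ℝ → ℝ) (t : ℝ) : ℝ := ⨅ i, x i t

lemma bddAbove_range_fin (a : Fin N → ℝ) : BddAbove (Set.range a) :=
  (Set.finite_range a).bddAbove

lemma bddBelow_range_fin (a : Fin N → ℝ) : BddBelow (Set.range a) :=
  (Set.finite_range a).bddBelow

lemma le_xsup (i : Fin N) (t : ℝ) : x i t ≤ xsup x t :=
  le_ciSup (bddAbove_range_fin (fun i => x i t)) i

lemma xinf_le (i : Fin N) (t : ℝ) : xinf x t ≤ x i t :=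
  ciInf_le (bddBelow_range_fin (fun i => x i t)) i

lemma exists_eq_xsup (t : ℝ) : ∃ i, xsup x t = x i t := by
  obtain ⟨i, hi⟩ := Finite.exists_max (fun i => x i t)
  exact ⟨i, le_antisymm (ciSup_le hi) (le_xsup i t)⟩

lemma exists_eq_xinf (t : ℝ) : ∃ i, xinf x t = x i t := by
  obtain ⟨i, hi⟩ := Finite.exists_min (fun i => x i t)
  exact ⟨i, le_antisymm (xinf_le i t) (le_ciInf hi)⟩

lemma xinf_le_xsup (t : ℝ) : xinf x t ≤ xsup x t := by
  obtain ⟨i, hi⟩ := exists_eq_xsup (x := x) t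
  rw [hi]; exact xinf_le i t

lemma xsup_neg (t : ℝ) : xsup (fun j u => -(x j u)) t = -(xinf x t) := by
  obtain ⟨i, hi⟩ := exists_eq_xinf (x := x) t
  refine le_antisymm (ciSup_le fun j => ?_) ?_
  · simp only [neg_le_neg_iff]; exact xinf_le j t
  · rw [hi]; exact le_xsup (x := fun j u => -(x j u)) i t

lemma xinf_neg (t : ℝ) : xinf (fun j u => -(x j u)) t = -(xsup x t) := by
  obtain ⟨i, hi⟩ := exists_eq_xsup (x := x) t
  refine le_antisymm ?_ (le_ciInf fun j => by
    simp only [neg_le_neg_iff]; exact le_xsup j t)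
  calc xinf (fun j u => -(x j u)) t ≤ -(x i t) := xinf_le (x := fun j u => -(x j u)) i t
    _ = -(xsup x t) := by rw [hi]

lemma xsup_cont (hx_cont : ∀ i, ContinuousOn (x i) (Ici 0)) :
    ContinuousOn (xsup x) (Ici 0) := by
  have h : ∀ t : ℝ, xsup x t = Finset.univ.sup' Finset.univ_nonempty (fun i => x i t) := by
    intro t; rw [Finset.sup'_univ_eq_ciSup]; rfl
  simp only [funext h]
  exact ContinuousOn.finset_sup'_apply Finset.univ_nonempty (fun i _ => hx_cont i)

lemma xinf_cont (hx_cont : ∀ i, ContinuousOn (x i) (Ici 0)) :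
    ContinuousOn (xinf x) (Ici 0) := by
  have h : ∀ t : ℝ, xinf x t = -(xsup (fun j u => -(x j u)) t) := by
    intro t; rw [xsup_neg, neg_neg]
  simp only [funext h]
  exact (xsup_cont (x := fun j u => -(x j u)) (fun i => (hx_cont i).neg)).neg

lemma phi_le_lin (K : NNReal) (hK : LipschitzOnWith K φ (Ici 0)) {d : ℝ} (hd : 0 ≤ d) :
    φ d ≤ φ 0 + K * d := by
  have := hK.dist_le_mul d (mem_Ici.2 hd) (0 : ℝ) (mem_Ici.2 le_rfl)
  rw [Real.dist_eq, Real.dist_eq, sub_zero, abs_of_nonneg hd] at this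
  have h2 : φ d - φ 0 ≤ |φ d - φ 0| := le_abs_self _
  linarith

/-- Upper bound on the RHS in terms of continuous quantities. -/
lemma rhs_le (hφ_pos : ∀ r : ℝ, 0 ≤ r → 0 < φ r)
    (hM_range : ∀ i j, ∀ t : ℝ, 0 ≤ t → M i j t ∈ Icc (0:ℝ) 1)
    (K : NNReal) (hK : LipschitzOnWith K φ (Ici 0))
    (i : Fin N) {s : ℝ} (hs : 0 ≤ s) :
    rhs φ M x i s ≤ (φ 0 + K * (xsup x s - xinf x s)) * (xsup x s - x i s) := by
  set C : ℝ := φ 0 + K * (xsup x s - xinf x s) with hC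
  have hC0 : 0 ≤ C := by
    have h1 := hφ_pos 0 le_rfl
    have h2 : (0:ℝ) ≤ K * (xsup x s - xinf x s) :=
      mul_nonneg K.2 (by linarith [xinf_le_xsup (x := x) s])
    linarith
  have hgap : 0 ≤ xsup x s - x i s := by linarith [le_xsup (x := x) i s]
  have hterm : ∀ j, M i j s * φ |x i s - x j s| * (x j s - x i s) ≤ C * (xsup x s - x i s) := by
    intro j
    rcases le_or_gt (x j s - x i s) 0 with hd | hd
    · have h1 : M i j s * φ |x i s - x j s| * (x j s - x i s) ≤ 0 :=
        mul_nonpos_of_nonneg_of_nonpos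
          (mul_nonneg (hM_range i j s hs).1 (hφ_pos _ (abs_nonneg _)).le) hd
      exact h1.trans (mul_nonneg hC0 hgap)
    · have h1 : M i j s * φ |x i s - x j s| ≤ C := by
        have h2 : φ |x i s - x j s| ≤ φ 0 + K * |x i s - x j s| :=
          phi_le_lin K hK (abs_nonneg _)
        have h3 : |x i s - x j s| ≤ xsup x s - xinf x s := by
          rw [abs_sub_le_iff]
          exact ⟨sub_le_sub (le_xsup i s) (xinf_le j s), sub_le_sub (le_xsup j s) (xinf_le i s)⟩
        have h4 : M i j s * φ |x i s - x j s| ≤ φ |x i s - x j s| := by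
          have := (hM_range i j s hs).2
          nlinarith [(hφ_pos _ (abs_nonneg (x i s - x j s))).le, (hM_range i j s hs).1]
        have h5 : (K:ℝ) * |x i s - x j s| ≤ K * (xsup x s - xinf x s) :=
          mul_le_mul_of_nonneg_left h3 K.2
        calc M i j s * φ |x i s - x j s| ≤ φ |x i s - x j s| := h4
          _ ≤ φ 0 + K * |x i s - x j s| := h2
          _ ≤ C := by rw [hC]; linarith
      have h6 : x j s - x i s ≤ xsup x s - x i s := by linarith [le_xsup (x := x) j s]
      calc M i j s * φ |x i s - x j s| * (x j s - x i s)
          ≤ C * (x j s - x i s) := by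
            apply mul_le_mul_of_nonneg_right h1 hd.le
        _ ≤ C * (xsup x s - x i s) := mul_le_mul_of_nonneg_left h6 hC0
  have hsum : ∑ j, M i j s * φ |x i s - x j s| * (x j s - x i s)
      ≤ (N : ℝ) * (C * (xsup x s - x i s)) := by
    calc ∑ j, M i j s * φ |x i s - x j s| * (x j s - x i s)
        ≤ ∑ _j : Fin N, C * (xsup x s - x i s) := Finset.sum_le_sum (fun j _ => hterm j)
      _ = (N : ℝ) * (C * (xsup x s - x i s)) := by
          rw [Finset.sum_const, Finset.card_univ, Fintype.card_fin, nsmul_eq_mul]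
  have hNpos : (0:ℝ) < N := by
    exact_mod_cast Nat.pos_of_ne_zero (NeZero.ne N)
  calc rhs φ M x i s ≤ (N:ℝ)⁻¹ * ((N:ℝ) * (C * (xsup x s - x i s))) := by
        unfold rhs
        apply mul_le_mul_of_nonneg_left hsum (inv_nonneg.2 hNpos.le)
    _ = C * (xsup x s - x i s) := by field_simp
 
/-- Lower bound on the RHS given an upper bound `L` on the relevant values of `φ`. -/
lemma rhs_ge (hφ_pos : ∀ r : ℝ, 0 ≤ r → 0 < φ r)
    (hM_range : ∀ i j, ∀ t : ℝ, 0 ≤ t → M i j t ∈ Icc (0:ℝ) 1)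
    (L : ℝ) (i : Fin N) {s : ℝ} (hs : 0 ≤ s)
    (hL : ∀ p q : Fin N, φ |x p s - x q s| ≤ L) :
    L * (xinf x s - x i s) ≤ rhs φ M x i s := by
  have hterm : ∀ j, L * (xinf x s - x i s) ≤ M i j s * φ |x i s - x j s| * (x j s - x i s) := by
    intro j
    have hL0 : 0 ≤ L := le_trans (hφ_pos _ (abs_nonneg (x i s - x i s))).le (hL i i)
    have hgap : xinf x s - x i s ≤ 0 := by linarith [xinf_le (x := x) i s]
    rcases le_or_gt 0 (x j s - x i s) with hd | hd
    · have h1 : 0 ≤ M i j s * φ |x i s - x j s| * (x j s - x i s) :=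
        mul_nonneg (mul_nonneg (hM_range i j s hs).1 (hφ_pos _ (abs_nonneg _)).le) hd
      nlinarith
    · have h1 : M i j s * φ |x i s - x j s| ≤ L := by
        have h4 : M i j s * φ |x i s - x j s| ≤ φ |x i s - x j s| := by
          nlinarith [(hφ_pos _ (abs_nonneg (x i s - x j s))).le, (hM_range i j s hs).1,
            (hM_range i j s hs).2]
        exact h4.trans (hL i j)
      have h0 : 0 ≤ M i j s * φ |x i s - x j s| :=
        mul_nonneg (hM_range i j s hs).1 (hφ_pos _ (abs_nonneg _)).le
      have h2 : xinf x s - x i s ≤ x j s - x i s := by linarith [xinf_le (x := x) j s]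
      nlinarith
  have hsum : (N : ℝ) * (L * (xinf x s - x i s))
      ≤ ∑ j, M i j s * φ |x i s - x j s| * (x j s - x i s) := by
    calc (N : ℝ) * (L * (xinf x s - x i s))
        = ∑ _j : Fin N, L * (xinf x s - x i s) := by
          rw [Finset.sum_const, Finset.card_univ, Fintype.card_fin, nsmul_eq_mul]
      _ ≤ _ := Finset.sum_le_sum (fun j _ => hterm j)
  have hNpos : (0:ℝ) < N := by
    exact_mod_cast Nat.pos_of_ne_zero (NeZero.ne N)
  calc L * (xinf x s - x i s) = (N:ℝ)⁻¹ * ((N:ℝ) * (L * (xinf x s - x i s))) := by field_simp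
    _ ≤ rhs φ M x i s := by
        unfold rhs
        apply mul_le_mul_of_nonneg_left hsum (inv_nonneg.2 hNpos.le)


lemma near_bound (hx_cont : ∀ i, ContinuousOn (x i) (Ici 0))
    {w : ℝ} (hw : 0 ≤ w) {ε : ℝ} (hε : 0 < ε) :
    ∃ η > 0, ∀ u ∈ Icc w (w + η),
      (∀ i, |x i u - x i w| ≤ ε) ∧ |xsup x u - xsup x w| ≤ ε ∧ |xinf x u - xinf x w| ≤ ε := by
  have hsub : Ici w ⊆ Ici 0 := Ici_subset_Ici.mpr hw
  have hev : ∀ f : ℝ → ℝ, ContinuousOn f (Ici 0) → ∀ᶠ u in 𝓝[≥] w, |f u - f w| ≤ ε := by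
    intro f hf
    have hcw : ContinuousWithinAt f (Ici w) w := (hf w (mem_Ici.2 hw)).mono hsub
    have h : ∀ᶠ y in 𝓝 (f w), |y - f w| ≤ ε :=
      eventually_of_mem (Metric.closedBall_mem_nhds _ hε)
        (fun y hy => by rwa [Metric.mem_closedBall, Real.dist_eq] at hy)
    exact hcw.eventually h
  have hall : ∀ᶠ u in 𝓝[≥] w,
      (∀ i, |x i u - x i w| ≤ ε) ∧ |xsup x u - xsup x w| ≤ ε ∧ |xinf x u - xinf x w| ≤ ε := by
    refine Eventually.and (eventually_all.2 (fun i => hev _ (hx_cont i))) (Eventually.and ?_ ?_)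
    · exact hev _ (xsup_cont hx_cont)
    · exact hev _ (xinf_cont hx_cont)
  rcases nhdsGE_basis_Icc.eventually_iff.1 hall with ⟨b, hb, hsub'⟩
  exact ⟨b - w, by linarith, fun u hu => hsub' (by
    simpa [add_sub_cancel] using hu : u ∈ Icc w b)⟩

lemma xsup_dini (hφ_lip : ∃ K : NNReal, LipschitzOnWith K φ (Ici 0))
    (hφ_pos : ∀ r : ℝ, 0 ≤ r → 0 < φ r)
    (hM_meas : ∀ i j, Measurable (M i j))
    (hM_range : ∀ i j, ∀ t : ℝ, 0 ≤ t → M i j t ∈ Icc (0:ℝ) 1)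
    (hx_cont : ∀ i, ContinuousOn (x i) (Ici 0))
    (hx_sol : ∀ i, ∀ t : ℝ, 0 ≤ t → x i t = x i 0 + ∫ s in (0:ℝ)..t, rhs φ M x i s)
    {w : ℝ} (hw : 0 ≤ w) {r : ℝ} (hr : 0 < r) :
    ∀ᶠ z in 𝓝[>] w, slope (xsup x) w z < r := by
  obtain ⟨K, hK⟩ := id hφ_lip
  set C₀ : ℝ := φ 0 + K * (xsup x w - xinf x w) + 1 with hC₀def
  have hC₀ : 0 < C₀ := by
    have h1 := hφ_pos 0 le_rfl
    have h2 : (0:ℝ) ≤ K * (xsup x w - xinf x w) :=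
      mul_nonneg K.2 (by linarith [xinf_le_xsup (x := x) w])
    simp only [hC₀def]; linarith
  set ρ : ℝ := r / (2 * C₀) with hρdef
  have hρ : 0 < ρ := div_pos hr (by linarith)
  set ε0 : ℝ := min (ρ/2) (1/(2*K+1)) with hε0def
  have hKnn : (0:ℝ) ≤ K := K.2
  have hε0 : 0 < ε0 := lt_min (by linarith) (by positivity)
  have hmin1 : ε0 ≤ ρ/2 := min_le_left _ _
  have hmin2 : ε0 ≤ 1/(2*(K:ℝ)+1) := min_le_right _ _
  obtain ⟨η, hη, hnear⟩ := near_bound (x := x) hx_cont hw hε0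
  set δ : ℝ := min η (1/C₀) with hδdef
  have hδ : 0 < δ := lt_min hη (by positivity)
  filter_upwards [Ioo_mem_nhdsGT (by linarith : w < w + δ)] with z hz
  obtain ⟨hwz, hzδ⟩ := hz
  have hz0 : (0:ℝ) ≤ z := le_trans hw hwz.le
  -- pointwise bound on the RHS over `[w, z]`
  have hbd : ∀ i : Fin N, ∀ u ∈ Icc w z,
      rhs φ M x i u ≤ C₀ * ((xsup x w - x i w) + ρ) := by
    intro i u hu
    have hu0 : (0:ℝ) ≤ u := le_trans hw hu.1
    have huη : u ∈ Icc w (w + η) :=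
      ⟨hu.1, le_trans hu.2 (by have := min_le_left η (1/C₀); linarith)⟩
    obtain ⟨hxi, hxs, hxinf⟩ := hnear u huη
    have h1 : rhs φ M x i u ≤ (φ 0 + K * (xsup x u - xinf x u)) * (xsup x u - x i u) :=
      rhs_le hφ_pos hM_range K hK i hu0
    have habs1 := abs_le.1 hxs
    have habs2 := abs_le.1 hxinf
    have habs3 := abs_le.1 (hxi i)
    have hε0le : 2 * (K:ℝ) * ε0 ≤ 1 := by
      have hA : 2*(K:ℝ)*ε0 ≤ 2*(K:ℝ)*(1/(2*(K:ℝ)+1)) :=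
        mul_le_mul_of_nonneg_left hmin2 (by linarith)
      have hB : 2*(K:ℝ)*(1/(2*(K:ℝ)+1)) ≤ 1 := by
        rw [mul_one_div, div_le_one (by linarith)]; linarith
      linarith
    have hfac1 : φ 0 + K * (xsup x u - xinf x u) ≤ C₀ := by
      have : xsup x u - xinf x u ≤ (xsup x w - xinf x w) + 2 * ε0 := by linarith
      have h2 : (K:ℝ) * (xsup x u - xinf x u) ≤ K * ((xsup x w - xinf x w) + 2*ε0) :=
        mul_le_mul_of_nonneg_left this hKnn
      simp only [hC₀def]; nlinarith
    have hfac1' : (0:ℝ) ≤ φ 0 + K * (xsup x u - xinf x u) := by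
      have h1' := hφ_pos 0 le_rfl
      have h2 : (0:ℝ) ≤ K * (xsup x u - xinf x u) :=
        mul_nonneg hKnn (by linarith [xinf_le_xsup (x := x) u])
      linarith
    have hfac2 : xsup x u - x i u ≤ (xsup x w - x i w) + ρ := by
      have hρ2 : 2 * ε0 ≤ ρ := by linarith
      linarith
    have hfac2' : (0:ℝ) ≤ xsup x u - x i u := by linarith [le_xsup (x := x) i u]
    calc rhs φ M x i u ≤ (φ 0 + K * (xsup x u - xinf x u)) * (xsup x u - x i u) := h1
      _ ≤ C₀ * ((xsup x w - x i w) + ρ) := by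
          apply mul_le_mul hfac1 hfac2 hfac2' hC₀.le
  -- integrate
  have hxz : ∀ i : Fin N, x i z ≤ xsup x w + (z - w) * (C₀ * ρ) := by
    intro i
    have hinc := increment hφ_lip hφ_pos hM_meas hM_range hx_cont hx_sol i hw hwz.le
    have hii : IntervalIntegrable (rhs φ M x i) volume w z :=
      rhs_integrable hφ_lip hφ_pos hM_meas hM_range hx_cont i hw hwz.le
    have hmono : (∫ u in w..z, rhs φ M x i u)
        ≤ ∫ _u in w..z, C₀ * ((xsup x w - x i w) + ρ) := by
      apply intervalIntegral.integral_mono_on hwz.le hii intervalIntegrable_const (hbd i)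
    rw [intervalIntegral.integral_const, smul_eq_mul] at hmono
    have hci : 0 ≤ xsup x w - x i w := by linarith [le_xsup (x := x) i w]
    have hδC : (z - w) * C₀ ≤ 1 := by
      have h1 : z - w ≤ 1/C₀ := by
        have := min_le_right η (1/C₀); linarith
      calc (z - w) * C₀ ≤ (1/C₀) * C₀ := mul_le_mul_of_nonneg_right h1 hC₀.le
        _ = 1 := by field_simp
    have : x i z ≤ x i w + (z - w) * (C₀ * ((xsup x w - x i w) + ρ)) := by linarith
    nlinarith [hC₀.le, hρ.le, sub_nonneg.2 hwz.le]
  have hsup : xsup x z ≤ xsup x w + (z - w) * (C₀ * ρ) := ciSup_le hxz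
  have hCρ : C₀ * ρ = r / 2 := by
    rw [hρdef]; field_simp
  rw [slope_def_field]
  rw [div_lt_iff₀ (by linarith : (0:ℝ) < z - w)]
  calc xsup x z - xsup x w ≤ (z - w) * (C₀ * ρ) := by linarith
    _ = (z - w) * (r/2) := by rw [hCρ]
    _ < r * (z - w) := by nlinarith

lemma xsup_mono (hφ_lip : ∃ K : NNReal, LipschitzOnWith K φ (Ici 0))
    (hφ_pos : ∀ r : ℝ, 0 ≤ r → 0 < φ r)
    (hM_meas : ∀ i j, Measurable (M i j))
    (hM_range : ∀ i j, ∀ t : ℝ, 0 ≤ t → M i j t ∈ Icc (0:ℝ) 1)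
    (hx_cont : ∀ i, ContinuousOn (x i) (Ici 0))
    (hx_sol : ∀ i, ∀ t : ℝ, 0 ≤ t → x i t = x i 0 + ∫ s in (0:ℝ)..t, rhs φ M x i s)
    {s t : ℝ} (hs : 0 ≤ s) (hst : s ≤ t) : xsup x t ≤ xsup x s := by
  have h := image_le_of_liminf_slope_right_le_deriv_boundary (f := xsup x) (a := s) (b := t)
    (B := fun _ => xsup x s) (B' := fun _ => 0)
    ((xsup_cont hx_cont).mono (fun u hu => le_trans hs hu.1))
    le_rfl continuousOn_const (fun w _ => hasDerivWithinAt_const _ _ _)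
    (fun w hw r hr => (xsup_dini hφ_lip hφ_pos hM_meas hM_range hx_cont hx_sol
        (le_trans hs hw.1) hr).frequently)
  exact h ⟨hst, le_rfl⟩

lemma xinf_mono (hφ_lip : ∃ K : NNReal, LipschitzOnWith K φ (Ici 0))
    (hφ_pos : ∀ r : ℝ, 0 ≤ r → 0 < φ r)
    (hM_meas : ∀ i j, Measurable (M i j))
    (hM_range : ∀ i j, ∀ t : ℝ, 0 ≤ t → M i j t ∈ Icc (0:ℝ) 1)
    (hx_cont : ∀ i, ContinuousOn (x i) (Ici 0))
    (hx_sol : ∀ i, ∀ t : ℝ, 0 ≤ t → x i t = x i 0 + ∫ s in (0:ℝ)..t, rhs φ M x i s)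
    {s t : ℝ} (hs : 0 ≤ s) (hst : s ≤ t) : xinf x s ≤ xinf x t := by
  have hsol' : ∀ i, ∀ u : ℝ, 0 ≤ u → -(x i u) = -(x i 0) +
      ∫ s' in (0:ℝ)..u, rhs φ M (fun j v => -(x j v)) i s' := by
    intro i u hu
    have := hx_sol i u hu
    have h2 : (∫ s' in (0:ℝ)..u, rhs φ M (fun j v => -(x j v)) i s')
        = -∫ s' in (0:ℝ)..u, rhs φ M x i s' := by
      rw [← intervalIntegral.integral_neg]
      apply intervalIntegral.integral_congr
      intro s' _
      exact rhs_neg i s'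
    rw [h2]; linarith
  have h := xsup_mono (x := fun j v => -(x j v)) hφ_lip hφ_pos hM_meas hM_range
    (fun i => (hx_cont i).neg) hsol' hs hst
  rw [xsup_neg, xsup_neg] at h
  linarith


/-- Exponential lower bound: solutions can approach the (initial) minimum at most
exponentially fast. -/
lemma explow (hφ_lip : ∃ K : NNReal, LipschitzOnWith K φ (Ici 0))
    (hφ_pos : ∀ r : ℝ, 0 ≤ r → 0 < φ r)
    (hM_meas : ∀ i j, Measurable (M i j))
    (hM_range : ∀ i j, ∀ t : ℝ, 0 ≤ t → M i j t ∈ Icc (0:ℝ) 1)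
    (hx_cont : ∀ i, ContinuousOn (x i) (Ici 0))
    (hx_sol : ∀ i, ∀ t : ℝ, 0 ≤ t → x i t = x i 0 + ∫ s in (0:ℝ)..t, rhs φ M x i s)
    (L : ℝ) (hL : 0 < L)
    (hφL : ∀ u : ℝ, 0 ≤ u → ∀ p q : Fin N, φ |x p u - x q u| ≤ L)
    (j : Fin N) {t0 s t : ℝ} (ht0 : 0 ≤ t0) (hs : t0 ≤ s) (hst : s ≤ t) :
    Real.exp (-L * (t - s)) * (x j s - xinf x t0) ≤ x j t - xinf x t0 := by
  set m : ℝ := xinf x t0 with hmdef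
  have hs0 : (0:ℝ) ≤ s := ht0.trans hs
  have hxm : ∀ v : ℝ, s ≤ v → m ≤ x j v := by
    intro v hv
    have h1 : xinf x t0 ≤ xinf x v :=
      xinf_mono hφ_lip hφ_pos hM_meas hM_range hx_cont hx_sol ht0 (hs.trans hv)
    exact h1.trans (xinf_le j v)
  -- the liminf-slope condition for `f = fun v => m - x j v`
  have hf' : ∀ w, s ≤ w → ∀ r, L * (x j w - m) < r →
      ∃ᶠ z in 𝓝[>] w, slope (fun v => m - x j v) w z < r := by
    intro w hw r hr
    have hw0 : (0:ℝ) ≤ w := hs0.trans hw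
    set ε' : ℝ := (r - L * (x j w - m)) / (2 * (L + 1)) with hε'def
    have hε' : 0 < ε' := div_pos (by linarith) (by linarith)
    obtain ⟨η, hη, hnear⟩ := near_bound (x := x) hx_cont hw0 hε'
    apply Filter.Eventually.frequently
    filter_upwards [Ioo_mem_nhdsGT (by linarith : w < w + η)] with z hz
    obtain ⟨hwz, hzη⟩ := hz
    -- pointwise lower bound for the RHS on `[w, z]`
    have hbd : ∀ v ∈ Icc w z, L * (m - x j w - ε') ≤ rhs φ M x j v := by
      intro v hv
      have hv0 : (0:ℝ) ≤ v := hw0.trans hv.1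
      have h1 : L * (xinf x v - x j v) ≤ rhs φ M x j v :=
        rhs_ge hφ_pos hM_range L j hv0 (hφL v hv0)
      have h2 : m ≤ xinf x v :=
        xinf_mono hφ_lip hφ_pos hM_meas hM_range hx_cont hx_sol ht0 (hs.trans (hw.trans hv.1))
      have h3 : x j v ≤ x j w + ε' := by
        have := (hnear v ⟨hv.1, hv.2.trans hzη.le⟩).1 j
        have := (abs_le.1 this).2
        linarith
      have h4 : L * (m - x j w - ε') ≤ L * (xinf x v - x j v) := by
        apply mul_le_mul_of_nonneg_left _ hL.le
        linarith
      linarith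
    have hinc := increment hφ_lip hφ_pos hM_meas hM_range hx_cont hx_sol j hw0 hwz.le
    have hii : IntervalIntegrable (rhs φ M x j) volume w z :=
      rhs_integrable hφ_lip hφ_pos hM_meas hM_range hx_cont j hw0 hwz.le
    have hmono : (∫ _v in w..z, L * (m - x j w - ε')) ≤ ∫ v in w..z, rhs φ M x j v :=
      intervalIntegral.integral_mono_on hwz.le intervalIntegrable_const hii hbd
    rw [intervalIntegral.integral_const, smul_eq_mul] at hmono
    rw [slope_def_field, div_lt_iff₀ (by linarith : (0:ℝ) < z - w)]
    have hxz : x j z - x j w ≥ (z - w) * (L * (m - x j w - ε')) := by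
      rw [hinc]; exact hmono
    have hLε' : L * (x j w - m + ε') < r := by
      have hP : 0 < r - L * (x j w - m) := by linarith
      have hde : (0:ℝ) < 2*(L+1) := by linarith
      have hA : L * ε' * (2*(L+1)) = L * (r - L * (x j w - m)) := by
        rw [hε'def]; field_simp
      nlinarith [hA, hP, hde, hL, mul_pos hP (show (0:ℝ) < L + 2 by linarith)]
    calc (m - x j z) - (m - x j w) = -(x j z - x j w) := by ring
      _ ≤ (z - w) * (L * (x j w - m + ε')) := by nlinarith
      _ < r * (z - w) := by
          have := sub_pos.2 hwz
          nlinarith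
  -- comparison with the exponential barrier
  have key : ∀ ε : ℝ, 0 < ε → m - x j t ≤ (m - x j s) * Real.exp (-L * (t - s)) + ε := by
    intro ε hε
    have hcont : ContinuousOn (fun v => m - x j v) (Icc s t) :=
      (continuousOn_const.sub ((hx_cont j).mono (fun v hv => le_trans hs0 hv.1)))
    have hB : ∀ v, HasDerivAt (fun v => (m - x j s) * Real.exp (-L * (v - s)) + ε)
        ((m - x j s) * (Real.exp (-L * (v - s)) * -L)) v := by
      intro v
      have h1 : HasDerivAt (fun v : ℝ => -L * (v - s)) (-L) v := by
        simpa using ((hasDerivAt_id v).sub_const s).const_mul (-L)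
      exact ((h1.exp).const_mul (m - x j s)).add_const ε
    have ha : m - x j s ≤ (m - x j s) * Real.exp (-L * (s - s)) + ε := by
      rw [sub_self, mul_zero, Real.exp_zero, mul_one]; linarith
    have hbound : ∀ w ∈ Ico s t, (fun v => m - x j v) w =
        (m - x j s) * Real.exp (-L * (w - s)) + ε →
        (fun v => L * (x j v - m)) w < (m - x j s) * (Real.exp (-L * (w - s)) * -L) := by
      intro w hw heq
      simp only at heq ⊢
      have h4 : L * (x j w - m) = -L * (m - x j w) := by ring
      rw [h4, heq]
      have hexpand : -L * ((m - x j s) * Real.exp (-L * (w - s)) + ε)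
          = (m - x j s) * (Real.exp (-L * (w - s)) * -L) - L * ε := by ring
      rw [hexpand]
      have : 0 < L * ε := mul_pos hL hε
      linarith
    exact image_le_of_liminf_slope_right_lt_deriv_boundary
      (f := fun v => m - x j v) (f' := fun v => L * (x j v - m)) (a := s) (b := t)
      hcont (fun w hw r hr => hf' w hw.1 r hr) ha hB hbound ⟨hst, le_rfl⟩
  have h2 : m - x j t ≤ (m - x j s) * Real.exp (-L * (t - s)) := by
    by_contra hcon
    push_neg at hcon
    obtain ⟨ε, hε1, hε2⟩ := exists_between (sub_pos.2 hcon)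
    have := key ε hε1
    linarith
  nlinarith [h2]


lemma M_integrable (hM_meas : ∀ i j, Measurable (M i j))
    (hM_range : ∀ i j, ∀ t : ℝ, 0 ≤ t → M i j t ∈ Icc (0:ℝ) 1)
    (j k : Fin N) {c d : ℝ} (hc : 0 ≤ c) (hcd : c ≤ d) :
    IntervalIntegrable (M j k) volume c d := by
  rw [intervalIntegrable_iff, uIoc_of_le hcd]
  refine Integrable.mono' (integrable_const 1) (hM_meas j k).aestronglyMeasurable ?_
  rw [ae_restrict_iff' measurableSet_Ioc]
  refine Eventually.of_forall (fun s hs => ?_)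
  have hs0 : (0:ℝ) ≤ s := hc.trans hs.1.le
  have h := hM_range j k s hs0
  rw [Real.norm_eq_abs, abs_of_nonneg h.1]
  exact h.2

lemma rhs_ge_split (hφ_pos : ∀ r : ℝ, 0 ≤ r → 0 < φ r)
    (hM_range : ∀ i j, ∀ t : ℝ, 0 ≤ t → M i j t ∈ Icc (0:ℝ) 1)
    (L : ℝ) (j k : Fin N) {s : ℝ} (hs : 0 ≤ s)
    (hL : ∀ p q : Fin N, φ |x p s - x q s| ≤ L)
    (c e : ℝ) (hc : 0 ≤ c) (hck : c ≤ x k s - x j s) (he : 0 ≤ e)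
    (hje : x j s - xinf x s ≤ e)
    (Kmin' : ℝ) (hKmin' : 0 ≤ Kmin') (hφKmin : Kmin' ≤ φ |x j s - x k s|) :
    (N:ℝ)⁻¹ * (M j k s * (Kmin' * c)) - L * e ≤ rhs φ M x j s := by
  have hL0 : 0 ≤ L := le_trans (hφ_pos _ (abs_nonneg (x j s - x j s))).le (hL j j)
  have hterm_k : M j k s * (Kmin' * c) ≤ M j k s * φ |x j s - x k s| * (x k s - x j s) := by
    have h1 : Kmin' * c ≤ φ |x j s - x k s| * (x k s - x j s) :=
      mul_le_mul hφKmin hck hc (hφ_pos _ (abs_nonneg _)).le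
    rw [mul_assoc]
    exact mul_le_mul_of_nonneg_left h1 (hM_range j k s hs).1
  have hterm_l : ∀ l : Fin N, -(L * e) ≤ M j l s * φ |x j s - x l s| * (x l s - x j s) := by
    intro l
    rcases le_or_gt 0 (x l s - x j s) with hd | hd
    · have h1 : 0 ≤ M j l s * φ |x j s - x l s| * (x l s - x j s) :=
        mul_nonneg (mul_nonneg (hM_range j l s hs).1 (hφ_pos _ (abs_nonneg _)).le) hd
      nlinarith [mul_nonneg hL0 he]
    · have h1 : M j l s * φ |x j s - x l s| ≤ L := by
        have h4 : M j l s * φ |x j s - x l s| ≤ φ |x j s - x l s| := by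
          nlinarith [(hφ_pos _ (abs_nonneg (x j s - x l s))).le, (hM_range j l s hs).1,
            (hM_range j l s hs).2]
        exact h4.trans (hL j l)
      have h0 : 0 ≤ M j l s * φ |x j s - x l s| :=
        mul_nonneg (hM_range j l s hs).1 (hφ_pos _ (abs_nonneg _)).le
      have h2 : -e ≤ x l s - x j s := by linarith [xinf_le (x := x) l s]
      nlinarith
  have hsum : M j k s * (Kmin' * c) + (N:ℝ) * (-(L * e))
      ≤ ∑ l, M j l s * φ |x j s - x l s| * (x l s - x j s) := by
    rw [← Finset.add_sum_erase _ _ (Finset.mem_univ k)]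
    have hcard : ((Finset.univ.erase k).card : ℝ) = (N:ℝ) - 1 := by
      rw [Finset.card_erase_of_mem (Finset.mem_univ k), Finset.card_univ, Fintype.card_fin]
      have hN1 : 1 ≤ N := Nat.pos_of_ne_zero (NeZero.ne N)
      push_cast [Nat.cast_sub hN1]
      ring
    have h2 : ((N:ℝ) - 1) * (-(L * e)) ≤
        ∑ l ∈ Finset.univ.erase k, M j l s * φ |x j s - x l s| * (x l s - x j s) := by
      calc ((N:ℝ) - 1) * (-(L * e))
          = ∑ _l ∈ Finset.univ.erase k, (-(L * e)) := by
            rw [Finset.sum_const, nsmul_eq_mul, hcard]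
        _ ≤ _ := Finset.sum_le_sum (fun l _ => hterm_l l)
    have h3 : (N:ℝ) * (-(L * e)) ≤ ((N:ℝ) - 1) * (-(L * e)) := by
      have : -(L * e) ≤ 0 := by nlinarith [mul_nonneg hL0 he]
      nlinarith
    linarith
  have hNpos : (0:ℝ) < N := by exact_mod_cast Nat.pos_of_ne_zero (NeZero.ne N)
  have h5 : (N:ℝ)⁻¹ * (M j k s * (Kmin' * c) + (N:ℝ) * (-(L * e)))
      ≤ (N:ℝ)⁻¹ * ∑ l, M j l s * φ |x j s - x l s| * (x l s - x j s) :=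
    mul_le_mul_of_nonneg_left hsum (inv_nonneg.2 hNpos.le)
  have h6 : (N:ℝ)⁻¹ * (M j k s * (Kmin' * c) + (N:ℝ) * (-(L * e)))
      = (N:ℝ)⁻¹ * (M j k s * (Kmin' * c)) - L * e := by
    field_simp
    ring
  rw [h6] at h5
  exact h5

/-- Key one-period estimate: if agent `k` is (initially) in the upper half of the
state interval and `j` hears `k` with integral weight at least `μ` over the period,
then at the end of the period `j` is quantitatively above the (initial) minimum. -/
lemma pull (hφ_lip : ∃ K : NNReal, LipschitzOnWith K φ (Ici 0))
    (hφ_pos : ∀ r : ℝ, 0 ≤ r → 0 < φ r)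
    (hM_meas : ∀ i j, Measurable (M i j))
    (hM_range : ∀ i j, ∀ t : ℝ, 0 ≤ t → M i j t ∈ Icc (0:ℝ) 1)
    (hx_cont : ∀ i, ContinuousOn (x i) (Ici 0))
    (hx_sol : ∀ i, ∀ t : ℝ, 0 ≤ t → x i t = x i 0 + ∫ s in (0:ℝ)..t, rhs φ M x i s)
    (Kmin Kmax : ℝ) (hKminpos : 0 < Kmin)
    (hφlow : ∀ u : ℝ, 0 ≤ u → ∀ p q : Fin N, Kmin ≤ φ |x p u - x q u|)
    (hφhigh : ∀ u : ℝ, 0 ≤ u → ∀ p q : Fin N, φ |x p u - x q u| ≤ Kmax)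
    (T μ : ℝ) (hT : 0 < T) (hμ : 0 < μ)
    (j k : Fin N) {t0 : ℝ} (ht0 : 0 ≤ t0)
    (hμint : μ ≤ ∫ s in t0..(t0 + T), M j k s)
    (hk : xsup x t0 + xinf x t0 ≤ 2 * x k t0) :
    xinf x t0 + Real.exp (-(2 * Kmax * T)) *
        (μ * Kmin / (2 * ((N:ℝ) * (1 + Kmax * T) + μ * Kmin))) *
        (xsup x t0 - xinf x t0) ≤ x j (t0 + T) := by
  have hNpos : (0:ℝ) < N := by exact_mod_cast Nat.pos_of_ne_zero (NeZero.ne N)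
  have hKmax : 0 < Kmax := lt_of_lt_of_le hKminpos
    (le_trans (hφlow 0 le_rfl j j) (hφhigh 0 le_rfl j j))
  set m : ℝ := xinf x t0 with hmdef
  set Dn : ℝ := xsup x t0 - m with hDndef
  have hDn : 0 ≤ Dn := by
    have := xinf_le_xsup (x := x) t0
    simp only [hDndef]; linarith
  set den : ℝ := (N:ℝ) * (1 + Kmax * T) + μ * Kmin with hdendef
  have hden : 0 < den := by
    have h1 : 0 < (N:ℝ) * (1 + Kmax * T) := by positivity
    have h2 : 0 < μ * Kmin := mul_pos hμ hKminpos
    simp only [hdendef]; linarith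
  set γ2 : ℝ := μ * Kmin / den with hγ2def
  have hγ2pos : 0 < γ2 := div_pos (mul_pos hμ hKminpos) hden
  have hγ2le : γ2 ≤ 1 := by
    rw [hγ2def, div_le_one hden, hdendef]
    have : 0 < (N:ℝ) * (1 + Kmax * T) := by positivity
    linarith
  set A₀ : ℝ := Real.exp (-Kmax * T) * (Dn / 2) with hA₀def
  have hA₀ : 0 ≤ A₀ := mul_nonneg (Real.exp_pos _).le (by linarith)
  set θ : ℝ := γ2 * A₀ with hθdef
  have hθ : 0 ≤ θ := mul_nonneg hγ2pos.le hA₀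
  have hθA : θ ≤ A₀ := by
    calc θ = γ2 * A₀ := rfl
      _ ≤ 1 * A₀ := mul_le_mul_of_nonneg_right hγ2le hA₀
      _ = A₀ := one_mul _
  have hkstay : ∀ t ∈ Icc t0 (t0 + T), A₀ ≤ x k t - m := by
    intro t ht
    have h1 := explow hφ_lip hφ_pos hM_meas hM_range hx_cont hx_sol Kmax hKmax
      (fun u hu p q => hφhigh u hu p q) k ht0 le_rfl ht.1
    have h2 : Real.exp (-Kmax * T) ≤ Real.exp (-Kmax * (t - t0)) := by
      apply Real.exp_le_exp.2
      have := ht.2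
      nlinarith
    have h3 : Dn / 2 ≤ x k t0 - m := by
      simp only [hDndef]
      simp only [hmdef] at hk ⊢
      linarith
    calc A₀ = Real.exp (-Kmax * T) * (Dn / 2) := rfl
      _ ≤ Real.exp (-Kmax * (t - t0)) * (x k t0 - m) := by
          apply mul_le_mul h2 h3 (by linarith) (Real.exp_pos _).le
      _ ≤ x k t - m := h1
  have hmain : θ * Real.exp (-Kmax * T) ≤ x j (t0 + T) - m := by
    by_cases hcase : ∃ t1 ∈ Icc t0 (t0 + T), θ ≤ x j t1 - m
    · obtain ⟨t1, ht1, hjt1⟩ := hcase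
      have h1 := explow hφ_lip hφ_pos hM_meas hM_range hx_cont hx_sol Kmax hKmax
        (fun u hu p q => hφhigh u hu p q) j ht0 ht1.1 ht1.2
      have h2 : Real.exp (-Kmax * T) ≤ Real.exp (-Kmax * (t0 + T - t1)) := by
        apply Real.exp_le_exp.2
        have := ht1.1
        nlinarith
      calc θ * Real.exp (-Kmax * T) = Real.exp (-Kmax * T) * θ := by ring
        _ ≤ Real.exp (-Kmax * (t0 + T - t1)) * (x j t1 - m) := by
            apply mul_le_mul h2 hjt1 hθ (Real.exp_pos _).le
        _ ≤ x j (t0 + T) - m := h1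
    · push_neg at hcase
      -- pointwise estimate on the whole period
      have hbd : ∀ s ∈ Icc t0 (t0 + T),
          (N:ℝ)⁻¹ * (M j k s * (Kmin * (A₀ - θ))) - Kmax * θ ≤ rhs φ M x j s := by
        intro s hsmem
        have hs0 : (0:ℝ) ≤ s := ht0.trans hsmem.1
        have hjm : x j s - m < θ := hcase s hsmem
        have hkm : A₀ ≤ x k s - m := hkstay s hsmem
        have hminf : m ≤ xinf x s :=
          xinf_mono hφ_lip hφ_pos hM_meas hM_range hx_cont hx_sol ht0 hsmem.1
        refine rhs_ge_split hφ_pos hM_range Kmax j k hs0 (hφhigh s hs0) (A₀ - θ) θ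
          (by linarith) (by linarith) hθ (by linarith) Kmin hKminpos.le (hφlow s hs0 j k)
      -- integrate the estimate
      have hii : IntervalIntegrable (rhs φ M x j) volume t0 (t0 + T) :=
        rhs_integrable hφ_lip hφ_pos hM_meas hM_range hx_cont j ht0 (by linarith)
      have hiM : IntervalIntegrable (M j k) volume t0 (t0 + T) :=
        M_integrable hM_meas hM_range j k ht0 (by linarith)
      have hig : IntervalIntegrable
          (fun s => (N:ℝ)⁻¹ * (M j k s * (Kmin * (A₀ - θ))) - Kmax * θ) volume t0 (t0 + T) := by
        apply IntervalIntegrable.sub _ intervalIntegrable_const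
        have h1 : (fun s => (N:ℝ)⁻¹ * (M j k s * (Kmin * (A₀ - θ))))
            = fun s => ((N:ℝ)⁻¹ * (Kmin * (A₀ - θ))) * M j k s := by
          funext s; ring
        rw [h1]
        exact hiM.const_mul _
      have hint : (∫ s in t0..(t0 + T),
          ((N:ℝ)⁻¹ * (M j k s * (Kmin * (A₀ - θ))) - Kmax * θ))
          ≤ ∫ s in t0..(t0 + T), rhs φ M x j s :=
        intervalIntegral.integral_mono_on (by linarith) hig hii hbd
      have hval : (∫ s in t0..(t0 + T),
          ((N:ℝ)⁻¹ * (M j k s * (Kmin * (A₀ - θ))) - Kmax * θ))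
          = ((N:ℝ)⁻¹ * (Kmin * (A₀ - θ))) * (∫ s in t0..(t0 + T), M j k s)
            - Kmax * θ * T := by
        have h1 : (fun s => (N:ℝ)⁻¹ * (M j k s * (Kmin * (A₀ - θ))) - Kmax * θ)
            = fun s => ((N:ℝ)⁻¹ * (Kmin * (A₀ - θ))) * M j k s - Kmax * θ := by
          funext s; ring
        rw [h1, intervalIntegral.integral_sub (hiM.const_mul _) intervalIntegrable_const,
          intervalIntegral.integral_const_mul, intervalIntegral.integral_const, smul_eq_mul]
        ring
      have hcoef : 0 ≤ (N:ℝ)⁻¹ * (Kmin * (A₀ - θ)) := by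
        apply mul_nonneg (inv_nonneg.2 hNpos.le)
        apply mul_nonneg hKminpos.le (by linarith)
      have hμ' : ((N:ℝ)⁻¹ * (Kmin * (A₀ - θ))) * μ
          ≤ ((N:ℝ)⁻¹ * (Kmin * (A₀ - θ))) * (∫ s in t0..(t0 + T), M j k s) :=
        mul_le_mul_of_nonneg_left hμint hcoef
      have hinc := increment hφ_lip hφ_pos hM_meas hM_range hx_cont hx_sol j ht0
        (by linarith : t0 ≤ t0 + T)
      -- the crucial algebraic identity
      have halg : ((N:ℝ)⁻¹ * (Kmin * (A₀ - θ))) * μ - Kmax * θ * T = θ := by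
        rw [hθdef, hγ2def]
        field_simp
        ring
      have hj0 : 0 ≤ x j t0 - m := by
        simp only [hmdef]; linarith [xinf_le (x := x) j t0]
      have hfin : θ ≤ x j (t0 + T) - m := by
        have h7 : x j (t0 + T) - x j t0 ≥ θ := by
          rw [hinc]
          calc θ = ((N:ℝ)⁻¹ * (Kmin * (A₀ - θ))) * μ - Kmax * θ * T := halg.symm
            _ ≤ ((N:ℝ)⁻¹ * (Kmin * (A₀ - θ))) * (∫ s in t0..(t0 + T), M j k s)
                - Kmax * θ * T := by linarith
            _ = ∫ s in t0..(t0 + T),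
                ((N:ℝ)⁻¹ * (M j k s * (Kmin * (A₀ - θ))) - Kmax * θ) := hval.symm
            _ ≤ ∫ s in t0..(t0 + T), rhs φ M x j s := hint
        linarith
      have hexp1 : Real.exp (-Kmax * T) ≤ 1 := by
        rw [Real.exp_le_one_iff]
        nlinarith
      calc θ * Real.exp (-Kmax * T) ≤ θ * 1 := mul_le_mul_of_nonneg_left hexp1 hθ
        _ = θ := mul_one _
        _ ≤ x j (t0 + T) - m := hfin
  -- rewrite the constant
  have hexp : Real.exp (-Kmax * T) * Real.exp (-Kmax * T) = Real.exp (-(2 * Kmax * T)) := by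
    rw [← Real.exp_add]; ring_nf
  have hconst : θ * Real.exp (-Kmax * T)
      = Real.exp (-(2 * Kmax * T)) * (μ * Kmin / (2 * den)) * Dn := by
    have h1 : θ * Real.exp (-Kmax * T)
        = (Real.exp (-Kmax * T) * Real.exp (-Kmax * T)) * (μ * Kmin / den * (Dn / 2)) := by
      rw [hθdef, hA₀def, hγ2def]; ring
    have h2 : μ * Kmin / den * (Dn / 2) = μ * Kmin / (2 * den) * Dn := by
      rw [div_mul_eq_mul_div, div_mul_eq_mul_div, div_eq_div_iff (by linarith) (by linarith)]
      ring
    rw [h1, hexp, h2]; ring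
  rw [hconst] at hmain
  simp only [hmdef, hDndef] at hmain ⊢
  linarith

lemma fin_sup_abs_sub (a : Fin N → ℝ) :
    (⨆ i, ⨆ j, |a i - a j|) = (⨆ i, a i) - ⨅ i, a i := by
  have le_sup : ∀ (b : Fin N → ℝ) (i : Fin N), b i ≤ ⨆ j, b j :=
    fun b i => le_ciSup (bddAbove_range_fin b) i
  have inf_le : ∀ (b : Fin N → ℝ) (i : Fin N), (⨅ j, b j) ≤ b i :=
    fun b i => ciInf_le (bddBelow_range_fin b) i
  refine le_antisymm (ciSup_le fun i => ciSup_le fun j => ?_) ?_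
  · rw [abs_sub_le_iff]
    constructor
    · exact sub_le_sub (le_sup a i) (inf_le a j)
    · exact sub_le_sub (le_sup a j) (inf_le a i)
  · obtain ⟨i, hi⟩ := Finite.exists_max a
    obtain ⟨j, hj⟩ := Finite.exists_min a
    have hieq : (⨆ k, a k) = a i := le_antisymm (ciSup_le hi) (le_sup a i)
    have hjeq : (⨅ k, a k) = a j := le_antisymm (inf_le a j) (le_ciInf hj)
    rw [hieq, hjeq]
    calc a i - a j ≤ |a i - a j| := le_abs_self _
      _ ≤ ⨆ j', |a i - a j'| := le_sup (fun j' => |a i - a j'|) j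
      _ ≤ ⨆ i', ⨆ j', |a i' - a j'| := le_sup (fun i' => ⨆ j', |a i' - a j'|) i

lemma sup_abs_eq (t : ℝ) :
    (⨆ i, ⨆ j, |x i t - x j t|) = xsup x t - xinf x t :=
  fin_sup_abs_sub (fun i => x i t)

end CoopAux

open CoopAux in
/-- Explicit exponential decay of the diameter for a
solution of the first-order cooperative system with communication failures
(fixed scaling) on the real line, under the Integral Scrambling Coefficient
condition on the family of weights. -/
theorem diameter_decay_ISC
    (N : ℕ) (hN : 2 ≤ N)
    (φ : ℝ → ℝ)
    (hφ_lip : ∃ K : NNReal, LipschitzOnWith K φ (Ici 0))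
    (hφ_pos : ∀ r : ℝ, 0 ≤ r → 0 < φ r)
    (M : Fin N → Fin N → ℝ → ℝ)
    (hM_meas : ∀ i j, Measurable (M i j))
    (hM_range : ∀ i j, ∀ t : ℝ, 0 ≤ t → M i j t ∈ Icc (0:ℝ) 1)
    (x : Fin N → ℝ → ℝ)
    (hx_cont : ∀ i, ContinuousOn (x i) (Ici 0))
    (hx_sol : ∀ i, ∀ t : ℝ, 0 ≤ t → x i t = x i 0 +
      ∫ s in (0:ℝ)..t,
        (N : ℝ)⁻¹ * ∑ j, M i j s * φ |x i s - x j s| * (x j s - x i s))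
    (T μ : ℝ) (hT : 0 < T) (hμ : 0 < μ)
    (hISC : ∀ i j, ∃ k, ∀ t : ℝ, 0 ≤ t →
      μ ≤ min (∫ s in t..(t + T), M i k s) (∫ s in t..(t + T), M j k s))
    (D : ℝ → ℝ) (hD : ∀ t, D t = ⨆ i, ⨆ j, |x i t - x j t|)
    (φmin φmax : ℝ)
    (hφmin : φmin = sInf (φ '' Icc 0 (D 0)))
    (hφmax : φmax = sSup (φ '' Icc 0 (D 0)))
    (Kmin Kmax : ℝ) (hKmin : Kmin = φmin) (hKmax : Kmax = φmax)
    (γtilde : ℝ)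
    (hγtilde : γtilde = μ * Kmin / (2 * ((N : ℝ) * (1 + Kmax * T) + μ * Kmin))) :
    ∀ n : ℕ, D ((n : ℝ) * T) ≤ (1 - Real.exp (-(2 * Kmax * T)) * γtilde) ^ n * D 0 := by
  haveI : NeZero N := ⟨by omega⟩
  have hx_sol' : ∀ i, ∀ t : ℝ, 0 ≤ t → x i t = x i 0 + ∫ s in (0:ℝ)..t, rhs φ M x i s :=
    hx_sol
  have hDfor : ∀ t, D t = xsup x t - xinf x t := fun t => by
    rw [hD t, sup_abs_eq]
  have hD00 : 0 ≤ D 0 := by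
    rw [hDfor 0]
    linarith [xinf_le_xsup (x := x) 0]
  -- all mutual distances stay within `[0, D 0]`
  have hdist : ∀ u : ℝ, 0 ≤ u → ∀ p q : Fin N, |x p u - x q u| ∈ Icc (0:ℝ) (D 0) := by
    intro u hu p q
    refine ⟨abs_nonneg _, ?_⟩
    have h1 : xsup x u ≤ xsup x 0 :=
      xsup_mono hφ_lip hφ_pos hM_meas hM_range hx_cont hx_sol' le_rfl hu
    have h2 : xinf x 0 ≤ xinf x u :=
      xinf_mono hφ_lip hφ_pos hM_meas hM_range hx_cont hx_sol' le_rfl hu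
    rw [hDfor 0, abs_sub_le_iff]
    constructor
    · linarith [le_xsup (x := x) p u, xinf_le (x := x) q u]
    · linarith [le_xsup (x := x) q u, xinf_le (x := x) p u]
  -- bounds for φ on `[0, D 0]`
  have hφcont : ContinuousOn φ (Icc 0 (D 0)) :=
    (phi_cont hφ_lip).mono (fun r hr => hr.1)
  have hne : (Icc (0:ℝ) (D 0)).Nonempty := ⟨0, le_rfl, hD00⟩
  have hbddb : BddBelow (φ '' Icc 0 (D 0)) :=
    (isCompact_Icc.image_of_continuousOn hφcont).bddBelow
  have hbdda : BddAbove (φ '' Icc 0 (D 0)) :=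
    (isCompact_Icc.image_of_continuousOn hφcont).bddAbove
  have hKminpos : 0 < Kmin := by
    obtain ⟨r0, hr0mem, hr0⟩ := isCompact_Icc.exists_sInf_image_eq hne hφcont
    rw [hKmin, hφmin, hr0]
    exact hφ_pos r0 hr0mem.1
  have hφlow : ∀ u : ℝ, 0 ≤ u → ∀ p q : Fin N, Kmin ≤ φ |x p u - x q u| := by
    intro u hu p q
    rw [hKmin, hφmin]
    exact csInf_le hbddb (mem_image_of_mem φ (hdist u hu p q))
  have hφhigh : ∀ u : ℝ, 0 ≤ u → ∀ p q : Fin N, φ |x p u - x q u| ≤ Kmax := by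
    intro u hu p q
    rw [hKmax, hφmax]
    exact le_csSup hbdda (mem_image_of_mem φ (hdist u hu p q))
  have hKmaxpos : 0 < Kmax :=
    lt_of_lt_of_le hKminpos (le_trans (hφlow 0 le_rfl ⟨0, by omega⟩ ⟨0, by omega⟩)
      (hφhigh 0 le_rfl ⟨0, by omega⟩ ⟨0, by omega⟩))
  set c : ℝ := 1 - Real.exp (-(2 * Kmax * T)) * γtilde with hcdef
  have hden : 0 < (N:ℝ) * (1 + Kmax * T) + μ * Kmin := by
    have hNpos : (0:ℝ) < N := by exact_mod_cast (by omega : 0 < N)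
    have h1 : 0 < (N:ℝ) * (1 + Kmax * T) := by positivity
    nlinarith [mul_pos hμ hKminpos]
  have hc0 : 0 ≤ c := by
    have h1 : Real.exp (-(2 * Kmax * T)) ≤ 1 := by
      rw [Real.exp_le_one_iff]
      nlinarith
    have h2 : γtilde ≤ 1/2 := by
      rw [hγtilde, div_le_iff₀ (by linarith)]
      have hNpos : (0:ℝ) < N := by exact_mod_cast (by omega : 0 < N)
      nlinarith [mul_pos hμ hKminpos, mul_pos hNpos (by nlinarith : (0:ℝ) < 1 + Kmax * T)]
    have h3 : 0 ≤ γtilde := by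
      rw [hγtilde]
      positivity
    have h4 : Real.exp (-(2 * Kmax * T)) * γtilde ≤ 1 * (1/2) :=
      mul_le_mul h1 h2 h3 zero_le_one
    rw [hcdef]
    linarith
  -- the one-period contraction
  have hstep : ∀ t0 : ℝ, 0 ≤ t0 → D (t0 + T) ≤ c * D t0 := by
    intro t0 ht0
    obtain ⟨i1, hi1⟩ := exists_eq_xsup (x := x) (t0 + T)
    obtain ⟨j1, hj1⟩ := exists_eq_xinf (x := x) (t0 + T)
    obtain ⟨k, hkISC⟩ := hISC i1 j1
    have hμboth := hkISC t0 ht0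
    have hμi : μ ≤ ∫ s in t0..(t0 + T), M i1 k s := le_trans hμboth (min_le_left _ _)
    have hμj : μ ≤ ∫ s in t0..(t0 + T), M j1 k s := le_trans hμboth (min_le_right _ _)
    have hDt0 : D t0 = xsup x t0 - xinf x t0 := hDfor t0
    have hDt1 : D (t0 + T) = x i1 (t0 + T) - x j1 (t0 + T) := by
      rw [hDfor (t0 + T), hi1, hj1]
    have hγeq : γtilde = μ * Kmin / (2 * ((N:ℝ) * (1 + Kmax * T) + μ * Kmin)) := hγtilde
    rcases le_or_gt (xsup x t0 + xinf x t0) (2 * x k t0) with hup | hlo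
    · -- `k` is in the upper half : `j1` is pulled up
      have hp := pull hφ_lip hφ_pos hM_meas hM_range hx_cont hx_sol' Kmin Kmax hKminpos
        hφlow hφhigh T μ hT hμ j1 k ht0 hμj hup
      rw [← hγeq] at hp
      have hiup : x i1 (t0 + T) ≤ xsup x t0 := by
        have h1 : xsup x (t0 + T) ≤ xsup x t0 :=
          xsup_mono hφ_lip hφ_pos hM_meas hM_range hx_cont hx_sol' ht0 (by linarith)
        rw [← hi1]; exact h1
      rw [hDt1, hDt0, hcdef]
      nlinarith [hp, hiup]
    · -- `k` is in the lower half : `i1` is pulled down (apply `pull` to `-x`)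
      set y : Fin N → ℝ → ℝ := fun i t => -(x i t) with hydef
      have habs : ∀ (p q : Fin N) (u : ℝ), |y p u - y q u| = |x p u - x q u| := by
        intro p q u
        rw [show y p u - y q u = -(x p u - x q u) by simp [hydef]; ring, abs_neg, abs_sub_comm]
      have hy_cont : ∀ i, ContinuousOn (y i) (Ici 0) := fun i => (hx_cont i).neg
      have hy_sol : ∀ i, ∀ u : ℝ, 0 ≤ u → y i u = y i 0 + ∫ s in (0:ℝ)..u, rhs φ M y i s := by
        intro i u hu
        have h2 : (∫ s in (0:ℝ)..u, rhs φ M y i s) = -∫ s in (0:ℝ)..u, rhs φ M x i s := by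
          rw [← intervalIntegral.integral_neg]
          exact intervalIntegral.integral_congr (fun s _ => rhs_neg i s)
        simp only [hydef]
        rw [h2]
        have := hx_sol' i u hu
        linarith
      have hyφlow : ∀ u : ℝ, 0 ≤ u → ∀ p q : Fin N, Kmin ≤ φ |y p u - y q u| := by
        intro u hu p q; rw [habs]; exact hφlow u hu p q
      have hyφhigh : ∀ u : ℝ, 0 ≤ u → ∀ p q : Fin N, φ |y p u - y q u| ≤ Kmax := by
        intro u hu p q; rw [habs]; exact hφhigh u hu p q
      have hyk : xsup y t0 + xinf y t0 ≤ 2 * y k t0 := by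
        rw [xsup_neg, xinf_neg]
        simp only [hydef]
        linarith
      have hp := pull (x := y) hφ_lip hφ_pos hM_meas hM_range hy_cont hy_sol Kmin Kmax
        hKminpos hyφlow hyφhigh T μ hT hμ i1 k ht0 hμi hyk
      rw [← hγeq, xsup_neg, xinf_neg] at hp
      simp only [hydef] at hp
      have hjlo : xinf x t0 ≤ x j1 (t0 + T) := by
        have h1 : xinf x t0 ≤ xinf x (t0 + T) :=
          xinf_mono hφ_lip hφ_pos hM_meas hM_range hx_cont hx_sol' ht0 (by linarith)
        rw [← hj1]; exact h1
      rw [hDt1, hDt0, hcdef]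
      nlinarith [hp, hjlo]
  -- conclude by induction
  intro n
  induction n with
  | zero =>
      simp only [Nat.cast_zero, zero_mul, pow_zero, one_mul]
      exact le_refl (D 0)
  | succ n ih =>
      have hcast : ((n + 1 : ℕ) : ℝ) * T = (n : ℝ) * T + T := by push_cast; ring
      have hnt0 : 0 ≤ (n : ℝ) * T := by positivity
      calc D (((n + 1 : ℕ) : ℝ) * T) = D ((n : ℝ) * T + T) := by rw [hcast]
        _ ≤ c * D ((n : ℝ) * T) := hstep _ hnt0
        _ ≤ c * ((1 - Real.exp (-(2 * Kmax * T)) * γtilde) ^ n * D 0) :=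
            mul_le_mul_of_nonneg_left ih hc0
        _ = (1 - Real.exp (-(2 * Kmax * T)) * γtilde) ^ (n + 1) * D 0 := by
            rw [hcdef, pow_succ]; ring
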